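/- Let R be a commutative ring, d₁, d₂ : ℚ̂₊ → R arbitrary functions, and a, b, c ∈ R. Then there exists a unique function F : ℚ̂₊ → R with F(0/1) = a, F(1/0) = b, F(1/1) = c satisfying the Farey recursion F(γ ⊕² α) = -d₁(α)F(γ) + d₂(α)F(γ ⊕ α) for all Farey pairs α, γ in ℚ̂₊ with γ ⊕² α ∈ ℚ̂₊. -/

import Mathlib

/-- Two fractions `a/b`, `c/d` form a Farey pair when `a*d - b*c = ±1`. -/
def FareyPair (a b : ℤ × ℤ) : Prop :=
  a.1 * b.2 - a.2 * b.1 = 1 ∨ a.1 * b.2 - a.2 * b.1 = -1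

/-- A nonnegative extended rational: a fraction `p/q` in lowest terms with
`p ≥ 0`, `q ≥ 0`, the fraction with denominator `0` being `1/0 = ∞`. -/
def IsNNExtRat (v : ℤ × ℤ) : Prop :=
  0 ≤ v.1 ∧ 0 ≤ v.2 ∧ Int.gcd v.1 v.2 = 1 ∧ (v.2 = 0 → v.1 = 1)

/-- The set `ℚ̂₊ = (ℚ ∩ [0,∞)) ∪ {1/0}`. -/
def NNExtRat : Type := {v : ℤ × ℤ // IsNNExtRat v}

/-! ### Auxiliary material -/

/-- A Farey decomposition of `v`: `v = γ ⊕² α`. -/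
def Decomp (α γ v : ℤ × ℤ) : Prop :=
  IsNNExtRat α ∧ IsNNExtRat γ ∧ FareyPair α γ ∧ γ + α + α = v

lemma coprime_of_det {a b x y : ℤ} (h : a * x - b * y = 1 ∨ a * x - b * y = -1) :
    Int.gcd a b = 1 := by
  rw [← Int.isCoprime_iff_gcd_eq_one]
  rcases h with h | h
  · exact ⟨x, -y, by linarith⟩
  · exact ⟨-x, y, by linarith⟩

lemma eq_one_of_pm {a x : ℤ} (h : a * x = 1 ∨ a * x = -1) (ha : 0 ≤ a) : a = 1 := by
  have hd : a ∣ 1 := by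
    rcases h with h | h
    · exact ⟨x, h.symm⟩
    · exact (dvd_neg).mp ⟨x, by linarith⟩
  exact Int.eq_one_of_dvd_one ha hd

lemma one_le_sum {α : ℤ × ℤ} (h : IsNNExtRat α) : 1 ≤ α.1 + α.2 := by
  obtain ⟨h1, h2, h3, h4⟩ := h
  rcases eq_or_lt_of_le h2 with h2' | h2'
  · have := h4 h2'.symm; omega
  · omega

/-- Box uniqueness: solutions of `x₁ q - x₂ p = δ` with `0 ≤ x ≤ (p,q)` are unique. -/
lemma box_unique {p q x1 x2 y1 y2 δ : ℤ} (hp : 1 ≤ p) (hq : 1 ≤ q)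
    (hco : Int.gcd p q = 1)
    (hx1 : 0 ≤ x1) (hx1' : x1 ≤ p) (hx2 : 0 ≤ x2) (hx2' : x2 ≤ q)
    (hy1 : 0 ≤ y1) (hy1' : y1 ≤ p) (hy2 : 0 ≤ y2) (hy2' : y2 ≤ q)
    (hx : x1 * q - x2 * p = δ) (hy : y1 * q - y2 * p = δ)
    (hδ : δ = 1 ∨ δ = -1) : x1 = y1 ∧ x2 = y2 := by
  have hmul : (x1 - y1) * q = (x2 - y2) * p := by ring_nf; linarith
  have hdvd : p ∣ (x1 - y1) := by
    have h1 : p ∣ (x1 - y1) * q := ⟨x2 - y2, by linarith⟩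
    have hco' : IsCoprime p q := Int.isCoprime_iff_gcd_eq_one.mpr hco
    exact hco'.dvd_of_dvd_mul_right h1
  obtain ⟨k, hk⟩ := hdvd
  have hk1 : -1 ≤ k := by nlinarith
  have hk2 : k ≤ 1 := by nlinarith
  interval_cases k
  · -- x1 - y1 = -p : x1 = 0, y1 = p
    have hk' : x1 - y1 = -p := by rw [hk]; ring
    have e1 : x1 = 0 ∧ y1 = p := by omega
    have e2 : (x2 - y2) * p = -p * q := by rw [← hmul, hk]; ring
    have e3 : x2 - y2 = -q := by
      have := mul_right_cancel₀ (by omega : p ≠ 0) (by linarith [e2] : (x2 - y2) * p = (-q) * p)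
      linarith
    have : x2 = 0 := by omega
    exfalso; rw [e1.1, this] at hx; simp at hx; omega
  · have hk' : x1 - y1 = 0 := by rw [hk]; ring
    constructor
    · omega
    · have h0 : (x2 - y2) * p = 0 := by
        rw [← hmul, hk']; ring
      have := mul_eq_zero.mp h0
      omega
  · have hk' : x1 - y1 = p := by rw [hk]; ring
    have e1 : x1 = p ∧ y1 = 0 := by omega
    have e2 : (x2 - y2) * p = p * q := by rw [← hmul, hk]; ring
    have e3 : x2 - y2 = q := by
      have := mul_right_cancel₀ (by omega : p ≠ 0) (by linarith [e2] : (x2 - y2) * p = q * p)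
      linarith
    have : y2 = 0 := by omega
    exfalso; rw [e1.2, this] at hy; simp at hy; omega

lemma decomp_facts {α γ v : ℤ × ℤ} (h : Decomp α γ v) :
    1 ≤ v.1 ∧ 1 ≤ v.2 ∧ ¬(v.1 = 1 ∧ v.2 = 1) ∧ Int.gcd v.1 v.2 = 1 := by
  obtain ⟨⟨ha1, ha2, ha3, ha4⟩, ⟨hc1, hc2, hc3, hc4⟩, hFP, hv⟩ := h
  obtain ⟨a1, a2⟩ := α; obtain ⟨c1, c2⟩ := γ; obtain ⟨p, q⟩ := v
  simp only [Prod.mk_add_mk, Prod.mk.injEq] at hv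
  simp only [FareyPair] at hFP
  simp only at ha1 ha2 ha3 ha4 hc1 hc2 hc3 hc4 hFP ⊢
  obtain ⟨hvp, hvq⟩ := hv
  have hq : 1 ≤ q := by
    rcases (eq_or_lt_of_le (by omega : (0:ℤ) ≤ q)) with h' | h'
    · exfalso
      have ha2' : a2 = 0 := by omega
      have hc2' : c2 = 0 := by omega
      rw [ha2', hc2'] at hFP
      simp at hFP
    · omega
  have hp : 1 ≤ p := by
    rcases (eq_or_lt_of_le (by omega : (0:ℤ) ≤ p)) with h' | h'
    · exfalso
      have ha1' : a1 = 0 := by omega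
      have hc1' : c1 = 0 := by omega
      rw [ha1', hc1'] at hFP
      simp at hFP
    · omega
  refine ⟨hp, hq, ?_, ?_⟩
  · rintro ⟨hp1, hq1⟩
    have ha1' : a1 = 0 := by omega
    have ha2' : a2 = 0 := by omega
    rw [ha1', ha2'] at ha3
    simp at ha3
  · have : q * a1 - p * a2 = (c2 * a1 - c1 * a2) := by rw [← hvp, ← hvq]; ring
    apply coprime_of_det (x := a2) (y := a1)
    rcases hFP with h' | h'
    · right; rw [show p * a2 - q * a1 = -(q * a1 - p * a2) by ring, this]; linarith
    · left; rw [show p * a2 - q * a1 = -(q * a1 - p * a2) by ring, this]; linarith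

lemma decomp_unique {α γ α' γ' v : ℤ × ℤ} (h : Decomp α γ v) (h' : Decomp α' γ' v) :
    α = α' ∧ γ = γ' := by
  obtain ⟨hp, hq, -, hco⟩ := decomp_facts h
  obtain ⟨⟨ha1, ha2, ha3, -⟩, ⟨hc1, hc2, hc3, -⟩, hFP, hv⟩ := h
  obtain ⟨⟨ha1', ha2', ha3', -⟩, ⟨hc1', hc2', hc3', -⟩, hFP', hv'⟩ := h'
  obtain ⟨a1, a2⟩ := α; obtain ⟨c1, c2⟩ := γ
  obtain ⟨b1, b2⟩ := α'; obtain ⟨e1, e2⟩ := γ'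
  obtain ⟨p, q⟩ := v
  simp only [Prod.mk_add_mk, Prod.mk.injEq] at hv hv'
  simp only [FareyPair] at hFP hFP'
  simp only at ha1 ha2 ha3 hc1 hc2 hc3 ha1' ha2' ha3' hc1' hc2' hc3' hp hq hco ⊢
  obtain ⟨hvp, hvq⟩ := hv
  obtain ⟨hvp', hvq'⟩ := hv'
  set ε : ℤ := a1 * c2 - a2 * c1 with hε
  set ε' : ℤ := b1 * e2 - b2 * e1 with hε'
  have dα : a1 * q - a2 * p = ε := by rw [← hvp, ← hvq]; ring
  have du : (c1 + a1) * q - (c2 + a2) * p = -ε := by rw [← hvp, ← hvq]; ring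
  have dα' : b1 * q - b2 * p = ε' := by rw [← hvp', ← hvq']; ring
  have du' : (e1 + b1) * q - (e2 + b2) * p = -ε' := by rw [← hvp', ← hvq']; ring
  have hεpm : ε = 1 ∨ ε = -1 := hFP
  have hεpm' : ε' = 1 ∨ ε' = -1 := hFP'
  have hcase : ε = ε' ∨ ε = -ε' := by rcases hεpm with h1|h1 <;> rcases hεpm' with h2|h2 <;> omega
  rcases hcase with hcase | hcase
  · have := box_unique hp hq hco ha1 (by omega) ha2 (by omega)
      ha1' (by omega) ha2' (by omega) dα (by rw [hcase] at *; exact dα') hεpm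
    refine ⟨by simp [Prod.ext_iff]; omega, by simp [Prod.ext_iff]; omega⟩
  · exfalso
    have h1 := box_unique hp hq hco ha1 (by omega) ha2 (by omega)
      (by omega : (0:ℤ) ≤ e1 + b1) (by omega) (by omega : (0:ℤ) ≤ e2 + b2) (by omega)
      dα (by rw [hcase]; exact du') hεpm
    have h2 := box_unique hp hq hco (by omega : (0:ℤ) ≤ c1 + a1) (by omega)
      (by omega : (0:ℤ) ≤ c2 + a2) (by omega) ha1' (by omega) ha2' (by omega)
      du (by rw [hcase]; ring_nf; linarith [dα']) (by omega)
    have hc10 : c1 = 0 := by omega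
    have hc20 : c2 = 0 := by omega
    rw [hc10, hc20] at hc3
    simp at hc3

/-- A Farey parent: `u` with `0 ≤ u ≤ v` and `u₁ q - u₂ p = 1`. -/
lemma parent_exists {p q : ℤ} (hp : 1 ≤ p) (hq : 1 ≤ q) (hco : Int.gcd p q = 1) :
    ∃ u1 u2 : ℤ, 0 ≤ u1 ∧ u1 ≤ p ∧ 0 ≤ u2 ∧ u2 ≤ q ∧ u1 * q - u2 * p = 1 := by
  rcases eq_or_lt_of_le hp with hp1 | hp2
  · exact ⟨1, q - 1, by omega, by omega, by omega, by omega, by rw [← hp1]; ring⟩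
  · obtain ⟨x, y, hxy⟩ := Int.isCoprime_iff_gcd_eq_one.mpr hco
    set r := y % p with hr
    have hr0 : 0 ≤ r := Int.emod_nonneg y (by omega)
    have hrp : r < p := Int.emod_lt_of_pos y (by omega)
    set s := -x - (y / p) * q with hs
    have key : r * q - s * p = 1 := by
      have hm : y % p = y - p * (y / p) := Int.emod_def y p
      rw [hr, hs, hm]; ring_nf; linarith [hxy]
    have hr1 : 1 ≤ r := by
      rcases eq_or_lt_of_le hr0 with h0 | h0
      · exfalso
        have hps : p * (-s) = 1 := by linear_combination key + q * h0
        have := eq_one_of_pm (a := p) (x := -s) (Or.inl hps) (by omega)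
        omega
      · omega
    refine ⟨r, s, hr0, by omega, ?_, ?_, key⟩
    · nlinarith
    · nlinarith

lemma decomp_exists {p q : ℤ} (hp : 1 ≤ p) (hq : 1 ≤ q) (hco : Int.gcd p q = 1)
    (hne : ¬(p = 1 ∧ q = 1)) : ∃ α γ : ℤ × ℤ, Decomp α γ (p, q) := by
  obtain ⟨u1, u2, h1, h2, h3, h4, hdet⟩ := parent_exists hp hq hco
  set w1 := p - u1 with hw1
  set w2 := q - u2 with hw2
  have hdet' : u1 * w2 - u2 * w1 = 1 := by rw [hw1, hw2]; ring_nf; linarith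
  have hcomp : (u1 ≤ w1 ∧ u2 ≤ w2) ∨ (w1 ≤ u1 ∧ w2 ≤ u2) := by
    by_cases hA : u1 ≤ w1 ∧ u2 ≤ w2
    · exact Or.inl hA
    by_cases hB : w1 ≤ u1 ∧ w2 ≤ u2
    · exact Or.inr hB
    exfalso
    rcases not_and_or.mp hA with hA' | hA' <;> rcases not_and_or.mp hB with hB' | hB' <;>
      push_neg at hA' hB'
    · omega
    · -- w1 < u1 and u2 < w2
      have hz : w1 + u2 ≤ 0 := by nlinarith
      have hw10 : w1 = 0 := by omega
      have hu20 : u2 = 0 := by omega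
      have hm : u1 * w2 = 1 := by linear_combination hdet' + w1 * hu20
      have hu11 : u1 = 1 := eq_one_of_pm (Or.inl hm) (by omega)
      have hw21 : w2 = 1 := by nlinarith
      exact hne ⟨by omega, by omega⟩
    · -- u1 < w1 and w2 < u2
      nlinarith
    · omega
  rcases hcomp with ⟨hle1, hle2⟩ | ⟨hle1, hle2⟩
  · -- α = u, γ = w - u
    refine ⟨(u1, u2), (w1 - u1, w2 - u2), ?_, ?_, ?_, ?_⟩
    · refine ⟨h1, h3, coprime_of_det (Or.inl hdet'), fun h0 => ?_⟩
      have h0' : u2 = 0 := h0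
      show u1 = 1
      exact eq_one_of_pm (a := u1) (x := w2 - u2)
        (Or.inl (by linear_combination hdet' + (w1 - u1) * h0')) h1
    · refine ⟨by show (0:ℤ) ≤ w1 - u1; omega, by show (0:ℤ) ≤ w2 - u2; omega, ?_, fun h0 => ?_⟩
      · exact coprime_of_det (a := w1 - u1) (b := w2 - u2) (x := u2) (y := u1)
          (Or.inr (by linear_combination -hdet'))
      · have h0' : w2 - u2 = 0 := h0
        show w1 - u1 = 1
        exact eq_one_of_pm (a := w1 - u1) (x := u2)
          (Or.inr (by linear_combination -hdet' + u1 * h0')) (by omega)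
    · exact Or.inl (by show u1 * (w2 - u2) - u2 * (w1 - u1) = 1; linear_combination hdet')
    · show ((w1 - u1, w2 - u2) : ℤ × ℤ) + (u1, u2) + (u1, u2) = (p, q)
      simp only [Prod.mk_add_mk, Prod.mk.injEq]
      constructor <;> omega
  · -- α = w, γ = u - w
    refine ⟨(w1, w2), (u1 - w1, u2 - w2), ?_, ?_, ?_, ?_⟩
    · refine ⟨by omega, by omega, ?_, fun h0 => ?_⟩
      · exact coprime_of_det (a := w1) (b := w2) (x := u2) (y := u1)
          (Or.inr (by linear_combination -hdet'))
      · have h0' : w2 = 0 := h0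
        show w1 = 1
        exact eq_one_of_pm (a := w1) (x := u2)
          (Or.inr (by linear_combination -hdet' + u1 * h0')) (by omega)
    · refine ⟨by show (0:ℤ) ≤ u1 - w1; omega, by show (0:ℤ) ≤ u2 - w2; omega, ?_, fun h0 => ?_⟩
      · exact coprime_of_det (a := u1 - w1) (b := u2 - w2) (x := w2) (y := w1)
          (Or.inl (by linear_combination hdet'))
      · have h0' : u2 - w2 = 0 := h0
        show u1 - w1 = 1
        exact eq_one_of_pm (a := u1 - w1) (x := w2)
          (Or.inl (by linear_combination hdet' + w1 * h0')) (by omega)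
    · exact Or.inr (by show w1 * (u2 - w2) - w2 * (u1 - w1) = -1; linear_combination -hdet')
    · show ((u1 - w1, u2 - w2) : ℤ × ℤ) + (w1, w2) + (w1, w2) = (p, q)
      simp only [Prod.mk_add_mk, Prod.mk.injEq]
      constructor <;> omega

lemma mediant_mem {α γ : ℤ × ℤ} (hα : IsNNExtRat α) (hγ : IsNNExtRat γ)
    (hFP : FareyPair α γ) : IsNNExtRat (γ + α) := by
  obtain ⟨ha1, ha2, ha3, ha4⟩ := hα
  obtain ⟨hc1, hc2, hc3, hc4⟩ := hγ
  obtain ⟨a1, a2⟩ := α; obtain ⟨c1, c2⟩ := γ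
  simp only [FareyPair] at hFP
  simp only at ha1 ha2 ha3 ha4 hc1 hc2 hc3 hc4 hFP
  refine ⟨by show (0:ℤ) ≤ c1 + a1; omega, by show (0:ℤ) ≤ c2 + a2; omega, ?_, fun h0 => ?_⟩
  · apply coprime_of_det (a := c1 + a1) (b := c2 + a2) (x := a2) (y := a1)
    rcases hFP with h' | h'
    · exact Or.inr (by linear_combination -h')
    · exact Or.inl (by linear_combination -h')
  · have h0' : c2 + a2 = 0 := h0
    show c1 + a1 = 1
    apply eq_one_of_pm (a := c1 + a1) (x := a2) _ (by omega)
    rcases hFP with h' | h'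
    · exact Or.inr (by linear_combination -h' + a1 * h0')
    · exact Or.inl (by linear_combination -h' + a1 * h0')

lemma decomp_lt₁ {α γ v : ℤ × ℤ} (h : Decomp α γ v) :
    (γ.1 + γ.2).toNat < (v.1 + v.2).toNat := by
  obtain ⟨hα, hγ, -, hv⟩ := h
  have h1 := one_le_sum hα
  have h2 := hγ.1; have h3 := hγ.2.1
  obtain ⟨a1, a2⟩ := α; obtain ⟨c1, c2⟩ := γ; obtain ⟨p, q⟩ := v
  simp only [Prod.mk_add_mk, Prod.mk.injEq] at hv
  simp only at h1 h2 h3 ⊢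
  omega

lemma decomp_lt₂ {α γ v : ℤ × ℤ} (h : Decomp α γ v) :
    ((γ + α).1 + (γ + α).2).toNat < (v.1 + v.2).toNat := by
  obtain ⟨hα, hγ, -, hv⟩ := h
  have h1 := one_le_sum hα
  have h2 := hγ.1; have h3 := hγ.2.1
  obtain ⟨a1, a2⟩ := α; obtain ⟨c1, c2⟩ := γ; obtain ⟨p, q⟩ := v
  simp only [Prod.mk_add_mk, Prod.mk.injEq] at hv ⊢
  simp only at h1 h2 h3
  omega

open Classical in
/-- The Farey recursive function, built by strong recursion on numerator+denominator. -/
noncomputable def Ff {R : Type*} [CommRing R] (d₁ d₂ : ℤ × ℤ → R) (a b c : R) :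
    ℤ × ℤ → R := fun v =>
  if v = (0, 1) then a
  else if v = (1, 0) then b
  else if v = (1, 1) then c
  else if h : ∃ w : (ℤ × ℤ) × (ℤ × ℤ), Decomp w.1 w.2 v then
    -d₁ (choose h).1 * Ff d₁ d₂ a b c (choose h).2
      + d₂ (choose h).1 * Ff d₁ d₂ a b c ((choose h).2 + (choose h).1)
  else 0
termination_by v => (v.1 + v.2).toNat
decreasing_by
  · exact decomp_lt₁ (choose_spec h)
  · exact decomp_lt₂ (choose_spec h)

lemma Ff_base₁ {R : Type*} [CommRing R] (d₁ d₂ : ℤ × ℤ → R) (a b c : R) :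
    Ff d₁ d₂ a b c (0, 1) = a := by rw [Ff]; simp [Prod.ext_iff]
lemma Ff_base₂ {R : Type*} [CommRing R] (d₁ d₂ : ℤ × ℤ → R) (a b c : R) :
    Ff d₁ d₂ a b c (1, 0) = b := by rw [Ff]; simp [Prod.ext_iff]
lemma Ff_base₃ {R : Type*} [CommRing R] (d₁ d₂ : ℤ × ℤ → R) (a b c : R) :
    Ff d₁ d₂ a b c (1, 1) = c := by rw [Ff]; simp [Prod.ext_iff]

lemma Ff_rec {R : Type*} [CommRing R] (d₁ d₂ : ℤ × ℤ → R) (a b c : R)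
    {α γ v : ℤ × ℤ} (hd : Decomp α γ v) :
    Ff d₁ d₂ a b c v = -d₁ α * Ff d₁ d₂ a b c γ + d₂ α * Ff d₁ d₂ a b c (γ + α) := by
  obtain ⟨hp, hq, hne, -⟩ := decomp_facts hd
  have hex : ∃ w : (ℤ × ℤ) × (ℤ × ℤ), Decomp w.1 w.2 v := ⟨(α, γ), hd⟩
  rw [Ff]
  rw [if_neg (by rintro rfl; simp at hp), if_neg (by rintro rfl; simp at hq),
    if_neg (by rintro rfl; simp at hne), dif_pos hex]
  obtain ⟨h1, h2⟩ := decomp_unique (Classical.choose_spec hex) hd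
  rw [h1, h2]

/-- Given a commutative ring `R`, arbitrary functions `d₁ d₂ : ℚ̂₊ → R`, and
`a b c ∈ R`, there is a unique `(d₁,d₂)`-Farey recursive function `F : ℚ̂₊ → R` with
`F(0/1) = a`, `F(1/0) = b`, `F(1/1) = c`; no invertibility of `d₁(1/0)` is needed. -/
theorem exists_unique_FRF_nonneg (R : Type*) [CommRing R] (d₁ d₂ : NNExtRat → R)
    (a b c : R) :
    ∃! F : NNExtRat → R,
      F ⟨(0, 1), by unfold IsNNExtRat; decide⟩ = a ∧
      F ⟨(1, 0), by unfold IsNNExtRat; decide⟩ = b ∧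
      F ⟨(1, 1), by unfold IsNNExtRat; decide⟩ = c ∧
      ∀ α γ : NNExtRat, FareyPair α.val γ.val →
        ∀ m m2 : NNExtRat, m.val = γ.val + α.val → m2.val = γ.val + α.val + α.val →
          F m2 = -d₁ α * F γ + d₂ α * F m := by
  classical
  set d₁' : ℤ × ℤ → R := fun w => if h : IsNNExtRat w then d₁ ⟨w, h⟩ else 0 with hd₁'
  set d₂' : ℤ × ℤ → R := fun w => if h : IsNNExtRat w then d₂ ⟨w, h⟩ else 0 with hd₂'
  have hkey : ∀ (α : NNExtRat), d₁' α.val = d₁ α ∧ d₂' α.val = d₂ α := by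
    intro α
    constructor
    · rw [hd₁']; simp only; rw [dif_pos α.2]; rfl
    · rw [hd₂']; simp only; rw [dif_pos α.2]; rfl
  refine ⟨fun v => Ff d₁' d₂' a b c v.val, ⟨?_, ?_, ?_, ?_⟩, ?_⟩
  · exact Ff_base₁ d₁' d₂' a b c
  · exact Ff_base₂ d₁' d₂' a b c
  · exact Ff_base₃ d₁' d₂' a b c
  · intro α γ hFP m m2 hm hm2
    have hd : Decomp α.val γ.val m2.val := ⟨α.2, γ.2, hFP, hm2.symm⟩
    show Ff d₁' d₂' a b c m2.val = -d₁ α * Ff d₁' d₂' a b c γ.val + d₂ α * Ff d₁' d₂' a b c m.val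
    rw [Ff_rec d₁' d₂' a b c hd, hm, (hkey α).1, (hkey α).2]
  · intro F' hF'
    funext v
    obtain ⟨hb1, hb2, hb3, hrec⟩ := hF'
    suffices key : ∀ n : ℕ, ∀ v : NNExtRat, (v.val.1 + v.val.2).toNat ≤ n →
        F' v = Ff d₁' d₂' a b c v.val by
      exact key (v.val.1 + v.val.2).toNat v le_rfl
    intro n
    induction n with
    | zero =>
      intro v hv
      exfalso
      have := one_le_sum v.2
      omega
    | succ n ih =>
      intro v hv
      obtain ⟨hv1, hv2, hv3, hv4⟩ := v.2
      by_cases hq0 : v.val.2 = 0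
      · have hval : v.val = (1, 0) := Prod.ext (hv4 hq0) hq0
        have : v = ⟨(1, 0), by unfold IsNNExtRat; decide⟩ := Subtype.ext hval
        rw [this, hb2, Ff_base₂]
      by_cases hp0 : v.val.1 = 0
      · have hq1 : v.val.2 = 1 := by
          rw [hp0] at hv3
          simp [Int.gcd] at hv3
          omega
        have hval : v.val = (0, 1) := Prod.ext hp0 hq1
        have : v = ⟨(0, 1), by unfold IsNNExtRat; decide⟩ := Subtype.ext hval
        rw [this, hb1, Ff_base₁]
      by_cases h11 : v.val = (1, 1)
      · have : v = ⟨(1, 1), by unfold IsNNExtRat; decide⟩ := Subtype.ext h11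
        rw [this, hb3, Ff_base₃]
      · have hp1 : 1 ≤ v.val.1 := by omega
        have hq1 : 1 ≤ v.val.2 := by omega
        have hne : ¬(v.val.1 = 1 ∧ v.val.2 = 1) := by
          rintro ⟨e1, e2⟩
          exact h11 (Prod.ext e1 e2)
        obtain ⟨α, γ, hd⟩ : ∃ α γ : ℤ × ℤ, Decomp α γ v.val := by
          have := decomp_exists hp1 hq1 hv3 hne
          rwa [Prod.mk.eta] at this
        obtain ⟨hdα, hdγ, hdFP, hdv⟩ := hd
        have hdd : Decomp α γ v.val := ⟨hdα, hdγ, hdFP, hdv⟩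
        have hrec' : F' v = -d₁ ⟨α, hdα⟩ * F' ⟨γ, hdγ⟩
            + d₂ ⟨α, hdα⟩ * F' ⟨γ + α, mediant_mem hdα hdγ hdFP⟩ :=
          hrec ⟨α, hdα⟩ ⟨γ, hdγ⟩ hdFP ⟨γ + α, mediant_mem hdα hdγ hdFP⟩ v rfl hdv.symm
        have hrecF := Ff_rec d₁' d₂' a b c hdd
        have ihG : F' ⟨γ, hdγ⟩ = Ff d₁' d₂' a b c γ := by
          apply ih
          show (γ.1 + γ.2).toNat ≤ n
          have := decomp_lt₁ hdd
          omega
        have ihM : F' ⟨γ + α, mediant_mem hdα hdγ hdFP⟩ = Ff d₁' d₂' a b c (γ + α) := by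
          apply ih
          show ((γ + α).1 + (γ + α).2).toNat ≤ n
          have := decomp_lt₂ hdd
          omega
        have e1 : d₁' α = d₁ ⟨α, hdα⟩ := (hkey ⟨α, hdα⟩).1
        have e2 : d₂' α = d₂ ⟨α, hdα⟩ := (hkey ⟨α, hdα⟩).2
        rw [hrec', hrecF, ihG, ihM, e1, e2]
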